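/- The extended Dempster's rule of combination yields an IBBA: if (m1, ω1) and (m2, ω2) are IBBAs on a finite nonempty frame Θ whose conflict c = Σ_{B∩C=∅} m1(B)·m2(C) is strictly less than 1, then the extended Dempster combination (m12, ω12), defined by m12(∅) = 0, m12(A) = K·(Σ_{B∩C=A} m1(B)·m2(C) + m1(A)·ω2 + ω1·m2(A)) for nonempty A, and ω12 = K·ω1·ω2 with K = (1 − c)^{-1}, is again an IBBA. -/
import Mathlib


open Finset

/-- A basic belief assignment (BBA) on a finite nonempty frame `Θ`. -/
def IsBBA {Θ : Type*} [Fintype Θ] [DecidableEq Θ] (m : Finset Θ → ℝ) : Prop :=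
  m ∅ = 0 ∧ (∀ A, 0 ≤ m A) ∧ ∑ A : Finset Θ, m A = 1

/-- Shafer's reliability discounting of `m` by the reliability factor `α`. -/
def rdiscount {Θ : Type*} [Fintype Θ] [DecidableEq Θ] (α : ℝ) (m : Finset Θ → ℝ) :
    Finset Θ → ℝ :=
  fun A => if A = Finset.univ then α * m A + (1 - α) else α * m A

/-- The conflict between two mass functions. -/
def conflict {Θ : Type*} [Fintype Θ] [DecidableEq Θ] (m1 m2 : Finset Θ → ℝ) : ℝ :=
  ∑ B : Finset Θ, ∑ C : Finset Θ, if B ∩ C = ∅ then m1 B * m2 C else 0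

/-- Dempster's rule of combination. -/
noncomputable def dempster {Θ : Type*} [Fintype Θ] [DecidableEq Θ] (m1 m2 : Finset Θ → ℝ) :
    Finset Θ → ℝ :=
  fun A => if A = ∅ then 0
    else (∑ B : Finset Θ, ∑ C : Finset Θ, if B ∩ C = A then m1 B * m2 C else 0) /
      (1 - conflict m1 m2)

/-- Iterated Dempster combination of `d 0, …, d i`. -/
noncomputable def combUpTo {Θ : Type*} [Fintype Θ] [DecidableEq Θ] (d : ℕ → Finset Θ → ℝ) :
    ℕ → Finset Θ → ℝ
  | 0 => d 0
  | i + 1 => dempster (combUpTo d (i)) (d (i + 1))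

/-- The assessment BBA on the frame `{H_1,…,H_N}` determined by belief degrees `β`. -/
def assessBBA {N : ℕ} (β : Fin N → ℝ) : Finset (Fin N) → ℝ :=
  fun A => if A = Finset.univ then 1 - ∑ n, β n
    else ∑ n : Fin N, if A = {n} then β n else 0

/-- An importance basic belief assignment (IBBA): `ω` is the mass on the
indecisiveness element `Ω`. -/
def IsIBBA {Θ : Type*} [Fintype Θ] [DecidableEq Θ] (m : Finset Θ → ℝ) (ω : ℝ) : Prop :=
  m ∅ = 0 ∧ (∀ A, 0 ≤ m A) ∧ 0 ≤ ω ∧ (∑ A : Finset Θ, m A) + ω = 1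

/-- Importance discounting of a BBA `m` by the importance factor `β`. -/
def impDiscount {Θ : Type*} [Fintype Θ] [DecidableEq Θ] (β : ℝ) (m : Finset Θ → ℝ) :
    (Finset Θ → ℝ) × ℝ :=
  (fun A => β * m A, 1 - β)

/-- The extended Dempster rule of combination of two IBBAs. -/
noncomputable def edComb {Θ : Type*} [Fintype Θ] [DecidableEq Θ]
    (p q : (Finset Θ → ℝ) × ℝ) : (Finset Θ → ℝ) × ℝ :=
  (fun A => if A = ∅ then 0
      else (1 - conflict p.1 q.1)⁻¹ *
        ((∑ B : Finset Θ, ∑ C : Finset Θ, if B ∩ C = A then p.1 B * q.1 C else 0) +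
          p.1 A * q.2 + p.2 * q.1 A),
    (1 - conflict p.1 q.1)⁻¹ * (p.2 * q.2))

/-- Iterated extended Dempster combination of `d 0, …, d i`. -/
noncomputable def edCombUpTo {Θ : Type*} [Fintype Θ] [DecidableEq Θ] (d : ℕ → (Finset Θ → ℝ) × ℝ) :
    ℕ → (Finset Θ → ℝ) × ℝ
  | 0 => d 0
  | i + 1 => edComb (edCombUpTo d i) (d (i + 1))

/-- The singleton conflict `Σ_{j≠p} m1({H_j})·m2({H_p})`. -/
def singConflict {N : ℕ} (m1 m2 : Finset (Fin N) → ℝ) : ℝ :=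
  ∑ j : Fin N, ∑ p : Fin N, if j ≠ p then m1 {j} * m2 {p} else 0

/-- One recursive aggregation step of the original ER algorithm. -/
noncomputable def erStep {N : ℕ} (s : (Fin N → ℝ) × ℝ) (b : Fin N → ℝ) (h : ℝ) : (Fin N → ℝ) × ℝ :=
  (fun n => (1 - ∑ j : Fin N, ∑ p : Fin N, if p ≠ j then s.1 j * b p else 0)⁻¹ *
      (s.1 n * b n + s.1 n * h + s.2 * b n),
   (1 - ∑ j : Fin N, ∑ p : Fin N, if p ≠ j then s.1 j * b p else 0)⁻¹ * (s.2 * h))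

/-- The recursively defined masses of the original ER algorithm. -/
noncomputable def erSeq {N : ℕ} (b : ℕ → Fin N → ℝ) (h : ℕ → ℝ) : ℕ → (Fin N → ℝ) × ℝ
  | 0 => (b 0, h 0)
  | i + 1 => erStep (erSeq b h i) (b (i + 1)) (h (i + 1))

/-- One recursive aggregation step of the modified ER algorithm, on triples
`(masses on singletons, m̃_H, m̄_H)`. -/
noncomputable def merStep {N : ℕ} (s : (Fin N → ℝ) × ℝ × ℝ) (b : Fin N → ℝ) (tld brd : ℝ) :
    (Fin N → ℝ) × ℝ × ℝ :=
  (fun n => (1 - ∑ j : Fin N, ∑ p : Fin N, if p ≠ j then s.1 j * b p else 0)⁻¹ *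
      (s.1 n * b n + s.1 n * (brd + tld) + (s.2.2 + s.2.1) * b n),
   (1 - ∑ j : Fin N, ∑ p : Fin N, if p ≠ j then s.1 j * b p else 0)⁻¹ *
      (s.2.1 * tld + s.2.1 * brd + s.2.2 * tld),
   (1 - ∑ j : Fin N, ∑ p : Fin N, if p ≠ j then s.1 j * b p else 0)⁻¹ * (s.2.2 * brd))

/-- The recursively defined masses of the modified ER algorithm. -/
noncomputable def merSeq {N : ℕ} (b : ℕ → Fin N → ℝ) (tld brd : ℕ → ℝ) : ℕ → (Fin N → ℝ) × ℝ × ℝ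
  | 0 => (b 0, tld 0, brd 0)
  | i + 1 => merStep (merSeq b tld brd i) (b (i + 1)) (tld (i + 1)) (brd (i + 1))

/-- Reliability-importance discounting: the mass-function part `m^{α,β}`. -/
def riDiscount {Θ : Type*} [Fintype Θ] [DecidableEq Θ] (α β : ℝ) (m : Finset Θ → ℝ) :
    Finset Θ → ℝ :=
  fun A => if A = Finset.univ then α * β * m A + (1 - α) * β else α * β * m A

/-- the extended Dempster's rule of combination yields an IBBA. -/
theorem edComb_isIBBA {Θ : Type*} [Fintype Θ] [DecidableEq Θ] [Nonempty Θ]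
    (m1 : Finset Θ → ℝ) (ω1 : ℝ) (m2 : Finset Θ → ℝ) (ω2 : ℝ)
    (h1 : IsIBBA m1 ω1) (h2 : IsIBBA m2 ω2) (hc : conflict m1 m2 < 1) :
    IsIBBA (edComb (m1, ω1) (m2, ω2)).1 (edComb (m1, ω1) (m2, ω2)).2 := by
  obtain ⟨h1e, h1n, h1w, h1s⟩ := h1
  obtain ⟨h2e, h2n, h2w, h2s⟩ := h2
  set c := conflict m1 m2 with hcdef
  have hcpos : (0:ℝ) < 1 - c := by linarith
  have hK : 0 ≤ (1 - c)⁻¹ := inv_nonneg.mpr hcpos.le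
  refine ⟨by simp [edComb], ?_, mul_nonneg hK (mul_nonneg h1w h2w), ?_⟩
  · intro A
    simp only [edComb]
    split
    · exact le_refl _
    · apply mul_nonneg hK
      apply add_nonneg (add_nonneg ?_ (mul_nonneg (h1n A) h2w)) (mul_nonneg h1w (h2n A))
      apply Finset.sum_nonneg; intro B _
      apply Finset.sum_nonneg; intro C _
      split
      · exact mul_nonneg (h1n B) (h2n C)
      · exact le_refl _
  · have hg : ∀ A : Finset Θ,
        (if A = ∅ then (0:ℝ) else (1 - c)⁻¹ *
          ((∑ B : Finset Θ, ∑ C : Finset Θ, if B ∩ C = A then m1 B * m2 C else 0) +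
            m1 A * ω2 + ω1 * m2 A))
        = (1 - c)⁻¹ *
          ((∑ B : Finset Θ, ∑ C : Finset Θ, if B ∩ C = A then m1 B * m2 C else 0) +
            m1 A * ω2 + ω1 * m2 A)
          - (if A = ∅ then (1 - c)⁻¹ * c else 0) := by
      intro A
      split
      · subst ‹A = ∅›
        have : (∑ B : Finset Θ, ∑ C : Finset Θ, if B ∩ C = ∅ then m1 B * m2 C else 0) = c := rfl
        rw [this, h1e, h2e]; ring
      · ring
    simp only [edComb]
    have hsum1 : ∑ A : Finset Θ, (if A = ∅ then (1 - c)⁻¹ * c else 0) = (1 - c)⁻¹ * c := by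
      rw [Finset.sum_ite_eq' Finset.univ (∅ : Finset Θ)]
      simp
    have hsum2 : ∑ A : Finset Θ, (∑ B : Finset Θ, ∑ C : Finset Θ,
        if B ∩ C = A then m1 B * m2 C else 0)
        = (∑ B : Finset Θ, m1 B) * (∑ C : Finset Θ, m2 C) := by
      rw [Finset.sum_comm]
      rw [Finset.sum_mul]
      apply Finset.sum_congr rfl
      intro B _
      rw [Finset.sum_comm, Finset.mul_sum]
      apply Finset.sum_congr rfl
      intro C _
      rw [Finset.sum_ite_eq Finset.univ (B ∩ C)]
      simp
    calc (∑ A : Finset Θ, (if A = ∅ then (0:ℝ) else (1 - c)⁻¹ *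
          ((∑ B : Finset Θ, ∑ C : Finset Θ, if B ∩ C = A then m1 B * m2 C else 0) +
            m1 A * ω2 + ω1 * m2 A))) + (1 - c)⁻¹ * (ω1 * ω2)
        = (∑ A : Finset Θ, ((1 - c)⁻¹ *
          ((∑ B : Finset Θ, ∑ C : Finset Θ, if B ∩ C = A then m1 B * m2 C else 0) +
            m1 A * ω2 + ω1 * m2 A)
          - (if A = ∅ then (1 - c)⁻¹ * c else 0))) + (1 - c)⁻¹ * (ω1 * ω2) := by
          rw [Finset.sum_congr rfl (fun A _ => hg A)]
      _ = (1 - c)⁻¹ * ((∑ B : Finset Θ, m1 B) * (∑ C : Finset Θ, m2 C)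
            + (∑ A : Finset Θ, m1 A) * ω2 + ω1 * (∑ A : Finset Θ, m2 A))
          - (1 - c)⁻¹ * c + (1 - c)⁻¹ * (ω1 * ω2) := by
          rw [Finset.sum_sub_distrib, hsum1, ← hsum2]
          congr 1
          rw [← Finset.mul_sum]
          congr 1
          rw [Finset.sum_add_distrib, Finset.sum_add_distrib, ← Finset.sum_mul, ← Finset.mul_sum]
      _ = 1 := by
          have e1 : (∑ B : Finset Θ, m1 B) = 1 - ω1 := by linarith
          have e2 : (∑ B : Finset Θ, m2 B) = 1 - ω2 := by linarith
          rw [e1, e2]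
          field_simp
          ring
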